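/- Let F be a field, d ≥ 1, and β ∈ F with β ≠ 0. Then β + β⁻¹ is a periodic point of the evaluation map of T_d = dickson 1 1 d over F if and only if β is a periodic point of the power map x ↦ x^d on F. -/
import Mathlib

open Polynomial

private lemma pow_iter (F : Type*) [Field F] (d : ℕ) (β : F) (m : ℕ) :
    (fun x : F => x ^ d)^[m] β = β ^ d ^ m := by
  induction m with
  | zero => simp
  | succ n ih => rw [Function.iterate_succ_apply', ih, ← pow_mul, pow_succ]

private lemma cheb_iter (F : Type*) [Field F] (d : ℕ) (β : F) (hβ : β ≠ 0) (m : ℕ) :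
    (fun x => (Polynomial.dickson 1 1 d : F[X]).eval x)^[m] (β + β⁻¹)
      = β ^ d ^ m + (β ^ d ^ m)⁻¹ := by
  induction m with
  | zero => simp
  | succ n ih =>
    have h : (β ^ d ^ n) * (β ^ d ^ n)⁻¹ = 1 := mul_inv_cancel₀ (pow_ne_zero _ hβ)
    rw [Function.iterate_succ_apply', ih,
      Polynomial.dickson_one_one_eval_add_inv _ _ h d, ← inv_pow, ← pow_mul, ← pow_mul,
      ← pow_succ, inv_pow]

theorem chebyshev_periodic_iff_power_periodic (F : Type*) [Field F] (d : ℕ) (hd : 1 ≤ d)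
    (β : F) (hβ : β ≠ 0) :
    (∃ m, 1 ≤ m ∧
        (fun x => (Polynomial.dickson 1 1 d : F[X]).eval x)^[m] (β + β⁻¹) = β + β⁻¹) ↔
      (∃ m, 1 ≤ m ∧ (fun x : F => x ^ d)^[m] β = β) := by
  constructor
  · rintro ⟨m, hm, h⟩
    rw [cheb_iter F d β hβ] at h
    set γ := β ^ d ^ m with hγ
    have hγ0 : γ ≠ 0 := pow_ne_zero _ hβ
    have key : (γ - β) * (γ * β - 1) = 0 := by
      have := h
      field_simp at this
      ring_nf
      ring_nf at this
      linear_combination this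
    rcases mul_eq_zero.mp key with h1 | h2
    · exact ⟨m, hm, by rw [pow_iter, ← hγ]; exact sub_eq_zero.mp h1⟩
    · refine ⟨2 * m, by omega, ?_⟩
      have hγβ : γ = β⁻¹ := by
        field_simp
        linear_combination h2
      rw [pow_iter, two_mul, pow_add, pow_mul, ← hγ, hγβ, inv_pow, ← hγ, hγβ, inv_inv]
  · rintro ⟨m, hm, h⟩
    rw [pow_iter] at h
    exact ⟨m, hm, by rw [cheb_iter F d β hβ, h]⟩
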